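/- Stability of the common-information belief update under small encoding perturbations: fix y ∈ 𝒴 and suppose P := Σ_{x,s} Q(y|x,s) P_X(x|s) b(s) satisfies P > |𝒳||𝒮|ε. Define the nominal updated belief φ(s) = ( Σ_{x,s'} 1[g(s',x,y)=s] Q(y|x,s') P_X(x|s') b(s') ) / P and the perturbed updated belief b'(s) = ( Σ_{x,s'} 1[g(s',x,y)=s] Q(y|x,s') p(x|s') b(s') ) / ( Σ_{x,s'} Q(y|x,s') p(x|s') b(s') ). Then for every s ∈ 𝒮, |b'(s) − φ(s)| ≤ 2|𝒳||𝒮|ε / (P − |𝒳||𝒮|ε). -/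
import Mathlib


open Finset

lemma belief_aux {X S : Type*} [Fintype X] [Fintype S]
    (f w : X → S → ℝ) (ε : ℝ)
    (hf : ∀ x s, |f x s| ≤ 1) (hw : ∀ x s, |w x s| ≤ ε) :
    |∑ x, ∑ s, f x s * w x s| ≤ (Fintype.card X : ℝ) * (Fintype.card S : ℝ) * ε := by
  calc |∑ x, ∑ s, f x s * w x s| ≤ ∑ x, |∑ s, f x s * w x s| :=
        Finset.abs_sum_le_sum_abs _ _
    _ ≤ ∑ x : X, ∑ s : S, |f x s * w x s| := by
        gcongr with x; exact Finset.abs_sum_le_sum_abs _ _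
    _ ≤ ∑ _x : X, ∑ _s : S, ε := by
        gcongr with x _ s _
        rw [abs_mul]
        calc |f x s| * |w x s| ≤ 1 * ε :=
              mul_le_mul (hf x s) (hw x s) (abs_nonneg _) one_pos.le
          _ = ε := one_mul ε
    _ = (Fintype.card X : ℝ) * (Fintype.card S : ℝ) * ε := by
        simp [Finset.sum_const, mul_assoc]

/-- Stability of the common-information belief update under
small encoding perturbations.  With `p(x|s) = P_X(x|s) + Δ(x,s)` where
`|Δ(x,s)·b(s)| ≤ ε`, fix `y` and suppose
`P := Σ_{x,s} Q(y|x,s) P_X(x|s) b(s) > |𝒳||𝒮|ε`.  Then for every `s`,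
`|b'(s) − φ(s)| ≤ 2|𝒳||𝒮|ε / (P − |𝒳||𝒮|ε)`, where `φ` is the nominal updated
belief and `b'` the perturbed one. -/
theorem belief_update_stability
    {X Y S : Type*} [Fintype X] [Fintype Y] [Fintype S] [DecidableEq S]
    (Q : Y → X → S → ℝ) (hQ : ∀ y x s, 0 ≤ Q y x s ∧ Q y x s ≤ 1)
    (hQsum : ∀ x s, ∑ y, Q y x s = 1)
    (g : S → X → Y → S)
    (b : S → ℝ) (hb : ∀ s, 0 ≤ b s) (hbsum : ∑ s, b s = 1)
    (PX p : X → S → ℝ)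
    (hPX : ∀ s, (∀ x, 0 ≤ PX x s) ∧ ∑ x, PX x s = 1)
    (hp : ∀ s, (∀ x, 0 ≤ p x s) ∧ ∑ x, p x s = 1)
    (ε : ℝ) (hε : 0 ≤ ε)
    (hΔ : ∀ x s, |(p x s - PX x s) * b s| ≤ ε)
    (y : Y)
    (hP : (Fintype.card X : ℝ) * (Fintype.card S : ℝ) * ε
            < ∑ x, ∑ s, Q y x s * PX x s * b s) :
    ∀ s : S,
      |(∑ x, ∑ s', (if g s' x y = s then (1:ℝ) else 0) * Q y x s' * p x s' * b s') /
          (∑ x, ∑ s', Q y x s' * p x s' * b s') -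
        (∑ x, ∑ s', (if g s' x y = s then (1:ℝ) else 0) * Q y x s' * PX x s' * b s') /
          (∑ x, ∑ s', Q y x s' * PX x s' * b s')|
      ≤ 2 * ((Fintype.card X : ℝ) * (Fintype.card S : ℝ)) * ε /
          ((∑ x, ∑ s', Q y x s' * PX x s' * b s') -
            (Fintype.card X : ℝ) * (Fintype.card S : ℝ) * ε) := by
  intro s
  set K : ℝ := (Fintype.card X : ℝ) * (Fintype.card S : ℝ) with hK
  set P : ℝ := ∑ x, ∑ s', Q y x s' * PX x s' * b s' with hPdef
  set P' : ℝ := ∑ x, ∑ s', Q y x s' * p x s' * b s' with hP'def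
  set A : ℝ := ∑ x, ∑ s', (if g s' x y = s then (1:ℝ) else 0) * Q y x s' * PX x s' * b s'
    with hAdef
  set A' : ℝ := ∑ x, ∑ s', (if g s' x y = s then (1:ℝ) else 0) * Q y x s' * p x s' * b s'
    with hA'def
  have hK0 : 0 ≤ K := by positivity
  have hKε : 0 ≤ K * ε := by positivity
  -- difference bounds
  have hfQ : ∀ x s', |Q y x s'| ≤ 1 := fun x s' => by
    rw [abs_of_nonneg (hQ y x s').1]; exact (hQ y x s').2
  have hfI : ∀ x s', |(if g s' x y = s then (1:ℝ) else 0) * Q y x s'| ≤ 1 := fun x s' => by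
    rw [abs_mul, abs_of_nonneg (hQ y x s').1]
    split <;> simp [(hQ y x s').2, abs_nonneg]
  have hdP : |P' - P| ≤ K * ε := by
    have : P' - P = ∑ x, ∑ s', Q y x s' * ((p x s' - PX x s') * b s') := by
      rw [hP'def, hPdef, ← Finset.sum_sub_distrib]
      refine Finset.sum_congr rfl fun x _ => ?_
      rw [← Finset.sum_sub_distrib]
      exact Finset.sum_congr rfl fun s' _ => by ring
    rw [this]
    exact belief_aux _ _ ε hfQ hΔ
  have hdA : |A' - A| ≤ K * ε := by
    have : A' - A = ∑ x, ∑ s',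
        ((if g s' x y = s then (1:ℝ) else 0) * Q y x s') * ((p x s' - PX x s') * b s') := by
      rw [hA'def, hAdef, ← Finset.sum_sub_distrib]
      refine Finset.sum_congr rfl fun x _ => ?_
      rw [← Finset.sum_sub_distrib]
      exact Finset.sum_congr rfl fun s' _ => by ring
    rw [this]
    exact belief_aux _ _ ε hfI hΔ
  have hA0 : 0 ≤ A := by
    apply Finset.sum_nonneg; intro x _
    apply Finset.sum_nonneg; intro s' _
    have := (hQ y x s').1; have := (hPX s').1 x; have := hb s'
    split <;> positivity
  have hAP : A ≤ P := by
    rw [hAdef, hPdef]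
    refine Finset.sum_le_sum fun x _ => Finset.sum_le_sum fun s' _ => ?_
    have hq := (hQ y x s').1
    have hpx := (hPX s').1 x
    have hbs := hb s'
    split
    · simp
    · simp only [zero_mul]
      positivity
  have hPpos : 0 < P := lt_of_le_of_lt hKε hP
  have hP'pos : 0 < P' := by
    have h1 : P - K * ε ≤ P' := by
      have := abs_le.mp hdP
      linarith [this.1]
    linarith [hP]
  have hPK : 0 < P - K * ε := by linarith [hP]
  have hP'ge : P - K * ε ≤ P' := by
    have := abs_le.mp hdP
    linarith [this.1]
  -- key identity
  have hid : A' / P' - A / P = ((A' - A) * P + A * (P - P')) / (P' * P) := by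
    field_simp
    ring
  rw [hid, abs_div, abs_of_pos (mul_pos hP'pos hPpos)]
  have hnum : |(A' - A) * P + A * (P - P')| ≤ 2 * K * ε * P := by
    calc |(A' - A) * P + A * (P - P')| ≤ |(A' - A) * P| + |A * (P - P')| := abs_add_le _ _
      _ = |A' - A| * P + A * |P - P'| := by
          rw [abs_mul, abs_mul, abs_of_pos hPpos, abs_of_nonneg hA0]
      _ ≤ (K * ε) * P + P * (K * ε) := by
          have h2 : |P - P'| ≤ K * ε := by rw [abs_sub_comm]; exact hdP
          have := mul_le_mul hdA (le_refl P) hPpos.le hKε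
          have h3 : A * |P - P'| ≤ P * (K * ε) :=
            mul_le_mul hAP h2 (abs_nonneg _) hPpos.le
          linarith
      _ = 2 * K * ε * P := by ring
  calc |(A' - A) * P + A * (P - P')| / (P' * P) ≤ (2 * K * ε * P) / (P' * P) := by
        gcongr
    _ = 2 * K * ε / P' := by
        rw [mul_comm P' P, ← div_div, mul_div_assoc, div_self hPpos.ne', mul_one]
    _ ≤ 2 * K * ε / (P - K * ε) := by
        gcongr
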